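/- (Strict positivity of the SFT loss increase.) In the setting of the SFT-then-RL coupling theorem, if there exists a prompt x with q(x) > 0 and responses y, y' ∈ Y such that p_SFT(y | x) > 0, p_SFT(y' | x) > 0, and r(x, y) ≠ r(x, y'), then the constant C₁(β) = ∑_x q(x) · ( log Z(x) − (1/β) ∑_y p_SFT(y | x) · r(x,y) ) is strictly positive, so the SFT loss strictly increases after the RL phase: L(p_RL) > L(p_SFT). -/

import Mathlib

open Real

/-- strict positivity of the SFT loss increase: if some prompt `x` with
`q(x) > 0` admits responses `y, y'` with positive SFT probability and different rewards,
then `C₁(β) > 0` and the SFT loss strictly increases after the RL phase. -/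
theorem sft_then_rl_strict {X Y : Type*} [Fintype X] [Fintype Y]
    [Nonempty X] [Nonempty Y]
    (q : X → ℝ) (hq : ∀ x, 0 ≤ q x) (hqsum : ∑ x, q x = 1)
    (pSFT : X → Y → ℝ) (hp : ∀ x y, 0 < pSFT x y)
    (hpsum : ∀ x, ∑ y, pSFT x y = 1)
    (r : X → Y → ℝ) (β : ℝ) (hβ : 0 < β)
    (Z : X → ℝ) (hZ : ∀ x, Z x = ∑ y, pSFT x y * Real.exp (r x y / β))
    (pRL : X → Y → ℝ)
    (hpRL : ∀ x y, pRL x y = pSFT x y * Real.exp (r x y / β) / Z x)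
    (L : (X → Y → ℝ) → ℝ)
    (hL : ∀ p, L p = ∑ x, q x * ∑ y, pSFT x y * (-Real.log (p x y)))
    (C₁ : ℝ)
    (hC₁ : C₁ = ∑ x, q x * (Real.log (Z x) - (1 / β) * ∑ y, pSFT x y * r x y))
    (hexists : ∃ x y y', 0 < q x ∧ 0 < pSFT x y ∧ 0 < pSFT x y' ∧ r x y ≠ r x y') :
    0 < C₁ ∧ L pSFT < L pRL := by
  have hZpos : ∀ x, 0 < Z x := by
    intro x
    rw [hZ x]
    exact Finset.sum_pos (fun y _ => mul_pos (hp x y) (Real.exp_pos _)) ⟨Classical.arbitrary Y, Finset.mem_univ _⟩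
  -- Jensen: for each x, exp(∑ p * (r/β)) ≤ Z x, hence 0 ≤ g x
  set g : X → ℝ := fun x => Real.log (Z x) - (1 / β) * ∑ y, pSFT x y * r x y with hg
  have key : ∀ x, Real.exp (∑ y, pSFT x y * (r x y / β)) ≤ Z x := by
    intro x
    rw [hZ x]
    have := convexOn_exp.map_sum_le (t := Finset.univ) (w := pSFT x)
      (p := fun y => r x y / β) (fun y _ => (hp x y).le) (hpsum x)
      (fun y _ => Set.mem_univ _)
    simpa [smul_eq_mul] using this
  have hsum_eq : ∀ x, (1 / β) * ∑ y, pSFT x y * r x y = ∑ y, pSFT x y * (r x y / β) := by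
    intro x
    rw [Finset.mul_sum]
    exact Finset.sum_congr rfl fun y _ => by ring
  have hg_nonneg : ∀ x, 0 ≤ g x := by
    intro x
    have h := Real.log_le_log (Real.exp_pos _) (key x)
    rw [Real.log_exp] at h
    rw [hg]
    simp only
    rw [hsum_eq x]
    linarith
  obtain ⟨x₀, y₀, y₁, hqx, hpy0, hpy1, hne⟩ := hexists
  have hg_pos : 0 < g x₀ := by
    have hstrict : Real.exp (∑ y, pSFT x₀ y * (r x₀ y / β)) < Z x₀ := by
      rw [hZ x₀]
      have := strictConvexOn_exp.map_sum_lt (t := Finset.univ) (w := pSFT x₀)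
        (p := fun y => r x₀ y / β) (fun y _ => hp x₀ y) (hpsum x₀)
        (fun y _ => Set.mem_univ _)
        ⟨y₀, Finset.mem_univ _, y₁, Finset.mem_univ _, by
          show r x₀ y₀ / β ≠ r x₀ y₁ / β
          intro h
          exact hne (by field_simp at h; linarith)⟩
      simpa [smul_eq_mul] using this
    have h := Real.log_lt_log (Real.exp_pos _) hstrict
    rw [Real.log_exp] at h
    rw [hg]
    simp only
    rw [hsum_eq x₀]
    linarith
  have hC₁pos : 0 < C₁ := by
    rw [hC₁]
    exact Finset.sum_pos' (fun x _ => mul_nonneg (hq x) (hg_nonneg x))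
      ⟨x₀, Finset.mem_univ _, mul_pos hqx hg_pos⟩
  refine ⟨hC₁pos, ?_⟩
  have hdiff : L pRL = L pSFT + C₁ := by
    rw [hL, hL, hC₁, ← Finset.sum_add_distrib]
    congr 1; ext x
    rw [← mul_add]
    congr 1
    have : ∀ y, pSFT x y * (-Real.log (pRL x y))
        = pSFT x y * (-Real.log (pSFT x y)) + pSFT x y * (Real.log (Z x) - r x y / β) := by
      intro y
      rw [hpRL x y, Real.log_div (mul_pos (hp x y) (Real.exp_pos _)).ne' (hZpos x).ne',
        Real.log_mul (hp x y).ne' (Real.exp_pos _).ne', Real.log_exp]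
      ring
    rw [Finset.sum_congr rfl (fun y _ => this y), Finset.sum_add_distrib]
    congr 1
    rw [hsum_eq x]
    rw [Finset.sum_congr rfl (fun y (_ : y ∈ Finset.univ) => mul_sub (pSFT x y) (Real.log (Z x)) (r x y / β)),
      Finset.sum_sub_distrib, ← Finset.sum_mul, hpsum x, one_mul]
  linarith
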